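/- The arc probability μ(r) := P(X₂ ∈ N^r(X₁)), for X₁, X₂ independent with law U_T, is strictly increasing on [1,∞): for all 1 ≤ r₁ < r₂ one has μ(r₁) < μ(r₂). Moreover μ(r) < 1 for every r ∈ [1,∞) and μ(r) → 1 as r → ∞. -/

import Mathlib

open MeasureTheory Real Set

noncomputable section

/-- The z-component of the cross product of two planar vectors. -/
def cross (u v : ℝ × ℝ) : ℝ := u.1 * v.2 - u.2 * v.1

/-- Barycentric coordinates of `x` with respect to the triangle with
vertices `a`, `b`, `c`. -/
def bary (a b c x : ℝ × ℝ) : Fin 3 → ℝ := fun i =>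
  if i = 1 then cross (x - a) (c - a) / cross (b - a) (c - a)
  else if i = 2 then cross (b - a) (x - a) / cross (b - a) (c - a)
  else 1 - cross (x - a) (c - a) / cross (b - a) (c - a)
    - cross (b - a) (x - a) / cross (b - a) (c - a)

/-- The closed triangle with vertices `a`, `b`, `c` (the set of points with
nonnegative barycentric coordinates). -/
def tri (a b c : ℝ × ℝ) : Set (ℝ × ℝ) := {x | ∀ i : Fin 3, 0 ≤ bary a b c x i}

/-- The least index maximizing the barycentric coordinates of `x`. -/
def jmax (a b c x : ℝ × ℝ) : Fin 3 :=
  if bary a b c x 1 ≤ bary a b c x 0 ∧ bary a b c x 2 ≤ bary a b c x 0 then 0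
  else if bary a b c x 2 ≤ bary a b c x 1 then 1 else 2

/-- The `r`-factor proximity region of `x` in the triangle with vertices `a`, `b`, `c`:
`N^r(x) = {z ∈ T : 1 − β_{j(x)}(z) ≤ r (1 − β_{j(x)}(x))}`. -/
def prox (a b c : ℝ × ℝ) (r : ℝ) (x : ℝ × ℝ) : Set (ℝ × ℝ) :=
  {z | z ∈ tri a b c ∧
    1 - bary a b c z (jmax a b c x) ≤ r * (1 - bary a b c x (jmax a b c x))}

/-- The uniform probability measure on `s ⊆ ℝ²` (normalized Lebesgue measure). -/
def unif (s : Set (ℝ × ℝ)) : Measure (ℝ × ℝ) := (volume s)⁻¹ • volume.restrict s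

def y1 : ℝ × ℝ := (0, 0)
def y2 : ℝ × ℝ := (1, 0)
def y3 : ℝ × ℝ := (1 / 2, Real.sqrt 3 / 2)

/-- The standard equilateral triangle. -/
def T : Set (ℝ × ℝ) := tri y1 y2 y3

/-- The `r`-factor proximity region in the standard triangle. -/
def N (r : ℝ) (x : ℝ × ℝ) : Set (ℝ × ℝ) := prox y1 y2 y3 r x

/-- The null arc probability `μ(r) = P(X₂ ∈ N^r(X₁))` for independent uniform
points in the standard triangle. -/
def mu (r : ℝ) : ℝ := (((unif T).prod (unif T)) {p | p.2 ∈ N r p.1}).toReal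





def B1 (x : ℝ × ℝ) : ℝ := x.1 - x.2 / Real.sqrt 3
def B2 (x : ℝ × ℝ) : ℝ := 2 * x.2 / Real.sqrt 3

lemma sqrt3_pos : 0 < Real.sqrt 3 := Real.sqrt_pos.2 (by norm_num)
lemma sqrt3_sq : Real.sqrt 3 * Real.sqrt 3 = 3 := Real.mul_self_sqrt (by norm_num)

lemma bary_one (x : ℝ × ℝ) : bary y1 y2 y3 x 1 = B1 x := by
  have h := sqrt3_pos.ne'
  simp only [bary, cross, y1, y2, y3, B1]
  norm_num
  field_simp

lemma bary_two (x : ℝ × ℝ) : bary y1 y2 y3 x 2 = B2 x := by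
  have h := sqrt3_pos.ne'
  simp only [bary, cross, y1, y2, y3, B2]
  norm_num
  field_simp
  simp only [Fin.isValue, Fin.reduceEq, if_false]
  field_simp

lemma bary_zero (x : ℝ × ℝ) : bary y1 y2 y3 x 0 = 1 - B1 x - B2 x := by
  have h1 : bary y1 y2 y3 x 0
      = 1 - bary y1 y2 y3 x 1 - bary y1 y2 y3 x 2 := by
    simp [bary]
  rw [h1, bary_one, bary_two]


lemma mem_T_iff (x : ℝ × ℝ) :
    x ∈ T ↔ 0 ≤ B1 x ∧ 0 ≤ B2 x ∧ B1 x + B2 x ≤ 1 := by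
  constructor
  · intro h
    have h0 := h 0; have h1 := h 1; have h2 := h 2
    rw [bary_zero] at h0; rw [bary_one] at h1; rw [bary_two] at h2
    exact ⟨h1, h2, by linarith⟩
  · rintro ⟨h1, h2, h3⟩ i
    rcases (by decide : ∀ j : Fin 3, j = 0 ∨ j = 1 ∨ j = 2) i with h | h | h <;>
      subst h <;> simp only [bary_zero, bary_one, bary_two] <;> linarith


lemma jmax_eq_zero {x : ℝ × ℝ} (h1 : B1 x ≤ 1 - B1 x - B2 x)
    (h2 : B2 x ≤ 1 - B1 x - B2 x) : jmax y1 y2 y3 x = 0 := by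
  rw [jmax, if_pos]
  rw [bary_zero, bary_one, bary_two]
  exact ⟨h1, h2⟩

lemma continuous_B1 : Continuous B1 := by
  unfold B1; fun_prop

lemma continuous_B2 : Continuous B2 := by
  unfold B2; fun_prop

lemma continuous_bary (i : Fin 3) : Continuous (fun x => bary y1 y2 y3 x i) := by
  have hc : Continuous B1 := continuous_B1
  have hc2 : Continuous B2 := continuous_B2
  rcases (by decide : ∀ j : Fin 3, j = 0 ∨ j = 1 ∨ j = 2) i with h | h | h <;>
    subst h <;> simp only [bary_zero, bary_one, bary_two] <;> fun_prop





lemma measurable_bary (i : Fin 3) : Measurable (fun x => bary y1 y2 y3 x i) :=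
  (continuous_bary i).measurable

lemma measurableSet_T : MeasurableSet T := by
  have : T = (⋂ i : Fin 3, {x | 0 ≤ bary y1 y2 y3 x i}) := by
    ext x; simp [T, tri, Set.mem_iInter]
  rw [this]
  exact MeasurableSet.iInter fun i =>
    measurableSet_le measurable_const (measurable_bary i)

lemma T_subset_box : T ⊆ Icc (0:ℝ) 1 ×ˢ Icc (0:ℝ) 1 := by
  intro x hx
  rw [mem_T_iff] at hx
  obtain ⟨h1, h2, h3⟩ := hx
  have hs := sqrt3_pos
  have hsq := sqrt3_sq
  have hx2 : x.2 = Real.sqrt 3 / 2 * B2 x := by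
    unfold B2; field_simp
  have hx1 : x.1 = B1 x + Real.sqrt 3 / 2 * B2 x / 2 * 2 / 2 * 2 / Real.sqrt 3 := by
    unfold B1 B2; field_simp; ring
  have hB2le : B2 x ≤ 1 := by linarith
  have hs2 : Real.sqrt 3 ≤ 2 := by nlinarith
  constructor
  · constructor
    · have : x.1 = B1 x + B2 x / 2 := by unfold B1 B2; field_simp; ring
      rw [this]; positivity
    · have h : x.1 = B1 x + B2 x / 2 := by unfold B1 B2; field_simp; ring
      rw [h]; linarith
  · constructor
    · rw [hx2]; positivity
    · rw [hx2]; nlinarith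
  
lemma volume_T_ne_top : volume T ≠ ⊤ := by
  have h : volume T ≤ volume (Icc (0:ℝ) 1 ×ˢ Icc (0:ℝ) 1) := measure_mono T_subset_box
  have : volume (Icc (0:ℝ) 1 ×ˢ Icc (0:ℝ) 1) = 1 := by
    rw [Measure.volume_eq_prod, Measure.prod_prod, Real.volume_Icc]
    simp
  refine (lt_of_le_of_lt h ?_).ne
  rw [this]; exact ENNReal.one_lt_top

def W : Set (ℝ × ℝ) := {x | 0 < B1 x ∧ 0 < B2 x ∧ B1 x + B2 x < 1}

lemma isOpen_W : IsOpen W :=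
  ((isOpen_lt continuous_const continuous_B1).inter
    ((isOpen_lt continuous_const continuous_B2).inter
      (isOpen_lt (continuous_B1.add continuous_B2) continuous_const)))

lemma volume_T_pos : 0 < volume T := by
  have hW : W.Nonempty := by
    have hs := sqrt3_pos.ne'
    have e1 : (Real.sqrt 3 / 6) / Real.sqrt 3 = 1/6 := by field_simp
    have e2 : 2 * (Real.sqrt 3 / 6) / Real.sqrt 3 = 1/3 := by field_simp; ring
    refine ⟨(1/2, Real.sqrt 3 / 6), ?_⟩
    simp only [W, B1, B2, Set.mem_setOf_eq]
    norm_num [e1, e2]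
  have hWT : W ⊆ T := by
    intro x hx
    rw [mem_T_iff]
    exact ⟨le_of_lt hx.1, le_of_lt hx.2.1, le_of_lt hx.2.2⟩
  calc 0 < volume W := isOpen_W.measure_pos volume hW
    _ ≤ volume T := measure_mono hWT

lemma unif_apply (s : Set (ℝ × ℝ)) (hs : MeasurableSet s) :
    unif T s = (volume T)⁻¹ * volume (s ∩ T) := by
  rw [unif, Measure.smul_apply, Measure.restrict_apply hs]
  rfl

instance unif_T_prob : IsProbabilityMeasure (unif T) := by
  constructor
  rw [unif_apply _ MeasurableSet.univ, Set.univ_inter]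
  exact ENNReal.inv_mul_cancel volume_T_pos.ne' volume_T_ne_top

lemma unif_pos_of_open {U : Set (ℝ × ℝ)} (hU : IsOpen U) (hne : U.Nonempty)
    (hsub : U ⊆ T) : 0 < unif T U := by
  rw [unif_apply _ hU.measurableSet, Set.inter_eq_left.2 hsub]
  exact ENNReal.mul_pos (ENNReal.inv_ne_zero.2 volume_T_ne_top)
    (hU.measure_pos volume hne).ne'

/-- the relevant event as a set -/
def E (r : ℝ) : Set ((ℝ × ℝ) × (ℝ × ℝ)) := {p | p.2 ∈ N r p.1}

lemma mu_eq (r : ℝ) : mu r = (((unif T).prod (unif T)) (E r)).toReal := rfl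

def F (p : (ℝ × ℝ) × (ℝ × ℝ)) : ℝ := bary y1 y2 y3 p.2 (jmax y1 y2 y3 p.1)

lemma measurable_F : Measurable F := by
  have hF : F = fun p =>
      if bary y1 y2 y3 p.1 1 ≤ bary y1 y2 y3 p.1 0 ∧
          bary y1 y2 y3 p.1 2 ≤ bary y1 y2 y3 p.1 0 then bary y1 y2 y3 p.2 0
      else if bary y1 y2 y3 p.1 2 ≤ bary y1 y2 y3 p.1 1 then bary y1 y2 y3 p.2 1
      else bary y1 y2 y3 p.2 2 := by
    funext p; unfold F jmax; split_ifs <;> rfl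
  rw [hF]
  have hm : ∀ i : Fin 3, Measurable fun p : (ℝ × ℝ) × (ℝ × ℝ) => bary y1 y2 y3 p.1 i :=
    fun i => (measurable_bary i).comp measurable_fst
  have hm2 : ∀ i : Fin 3, Measurable fun p : (ℝ × ℝ) × (ℝ × ℝ) => bary y1 y2 y3 p.2 i :=
    fun i => (measurable_bary i).comp measurable_snd
  refine Measurable.ite ?_ (hm2 0) (Measurable.ite ?_ (hm2 1) (hm2 2))
  · exact (measurableSet_le (hm 1) (hm 0)).inter (measurableSet_le (hm 2) (hm 0))
  · exact measurableSet_le (hm 2) (hm 1)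

lemma E_eq (r : ℝ) : E r = {p | p.2 ∈ T} ∩ {p | 1 - F p ≤ r * (1 - F (p.1, p.1))} := by
  ext p
  simp only [E, N, prox, T, F, Set.mem_setOf_eq, Set.mem_inter_iff]

lemma measurableSet_E (r : ℝ) : MeasurableSet (E r) := by
  rw [E_eq]
  refine (measurableSet_T.preimage measurable_snd).inter ?_
  exact measurableSet_le (measurable_const.sub measurable_F)
    (measurable_const.mul (measurable_const.sub
      (measurable_F.comp (measurable_fst.prodMk measurable_fst))))

abbrev nu : Measure ((ℝ × ℝ) × (ℝ × ℝ)) := (unif T).prod (unif T)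

instance : IsProbabilityMeasure nu := by unfold nu; infer_instance

lemma nu_TT : nu (T ×ˢ T) = 1 := by
  rw [Measure.prod_prod]
  have h : unif T T = 1 := by
    rw [unif_apply _ measurableSet_T, Set.inter_self]
    exact ENNReal.inv_mul_cancel volume_T_pos.ne' volume_T_ne_top
  rw [h, mul_one]

lemma nu_inter_TT (s : Set ((ℝ × ℝ) × (ℝ × ℝ))) : nu (s ∩ T ×ˢ T) = nu s := by
  refine measure_inter_conull ?_
  have := prob_compl_eq_one_sub (μ := nu) (measurableSet_T.prod measurableSet_T)
  rw [this, nu_TT]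
  simp

lemma bary_le_one {x : ℝ × ℝ} (hx : x ∈ T) (j : Fin 3) : bary y1 y2 y3 x j ≤ 1 := by
  rw [mem_T_iff] at hx
  obtain ⟨h1, h2, h3⟩ := hx
  rcases (by decide : ∀ j : Fin 3, j = 0 ∨ j = 1 ∨ j = 2) j with h | h | h <;>
    subst h <;> simp only [bary_zero, bary_one, bary_two] <;> linarith

lemma E_inter_mono {r₁ r₂ : ℝ} (h : r₁ ≤ r₂) : E r₁ ∩ T ×ˢ T ⊆ E r₂ := by
  rintro ⟨x, z⟩ ⟨hE, hx, -⟩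
  obtain ⟨hz, hle⟩ := hE
  refine ⟨hz, hle.trans ?_⟩
  have hF : bary y1 y2 y3 x (jmax y1 y2 y3 x) ≤ 1 := bary_le_one hx _
  exact mul_le_mul_of_nonneg_right h (by linarith)

lemma nu_E_mono {r₁ r₂ : ℝ} (h : r₁ ≤ r₂) : nu (E r₁) ≤ nu (E r₂) := by
  rw [← nu_inter_TT (E r₁)]
  exact measure_mono (E_inter_mono h)

lemma mu_mono : Monotone mu := fun r₁ r₂ h =>
  ENNReal.toReal_mono (measure_ne_top _ _) (nu_E_mono h)

lemma mu_le_one (r : ℝ) : mu r ≤ 1 := by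
  rw [mu_eq]
  have := prob_le_one (μ := nu) (s := E r)
  calc (nu (E r)).toReal ≤ (1 : ENNReal).toReal :=
        ENNReal.toReal_mono ENNReal.one_ne_top this
    _ = 1 := ENNReal.toReal_one

/-! ### open rectangles in parameter space -/

def Ux (a a' : ℝ) : Set (ℝ × ℝ) :=
  {x | 0 < B1 x ∧ 0 < B2 x ∧ B1 x < 1 - B1 x - B2 x ∧ B2 x < 1 - B1 x - B2 x ∧
    a < B1 x + B2 x ∧ B1 x + B2 x < a'}

def Vz (b b' : ℝ) : Set (ℝ × ℝ) :=
  {z | 0 < B1 z ∧ 0 < B2 z ∧ b < B1 z + B2 z ∧ B1 z + B2 z < b'}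

lemma isOpen_Ux (a a' : ℝ) : IsOpen (Ux a a') := by
  have h1 := continuous_B1; have h2 := continuous_B2
  exact (isOpen_lt continuous_const h1).inter <|
    (isOpen_lt continuous_const h2).inter <|
    (isOpen_lt h1 (by fun_prop)).inter <|
    (isOpen_lt h2 (by fun_prop)).inter <|
    (isOpen_lt continuous_const (h1.add h2)).inter
    (isOpen_lt (h1.add h2) continuous_const)

lemma isOpen_Vz (b b' : ℝ) : IsOpen (Vz b b') := by
  have h1 := continuous_B1; have h2 := continuous_B2
  exact (isOpen_lt continuous_const h1).inter <|
    (isOpen_lt continuous_const h2).inter <|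
    (isOpen_lt continuous_const (h1.add h2)).inter
    (isOpen_lt (h1.add h2) continuous_const)

lemma Ux_subset_T (a a' : ℝ) : Ux a a' ⊆ T := by
  rintro x ⟨h1, h2, h3, h4, -, -⟩
  rw [mem_T_iff]; exact ⟨h1.le, h2.le, by linarith⟩

lemma Vz_subset_T {b b' : ℝ} (hb' : b' ≤ 1) : Vz b b' ⊆ T := by
  rintro z ⟨h1, h2, -, h4⟩
  rw [mem_T_iff]; exact ⟨h1.le, h2.le, by linarith⟩

lemma B1_pt (m : ℝ) : B1 (3*m/4, m*Real.sqrt 3/4) = m/2 := by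
  have hs := sqrt3_pos.ne'
  unfold B1; field_simp; ring

lemma B2_pt (m : ℝ) : B2 (3*m/4, m*Real.sqrt 3/4) = m/2 := by
  have hs := sqrt3_pos.ne'
  unfold B2; field_simp; ring

lemma Ux_nonempty {a a' : ℝ} (ha : 0 ≤ a) (haa : a < a') (ha' : a' ≤ 1/2) :
    (Ux a a').Nonempty := by
  set m := (a + a')/2 with hm
  refine ⟨(3*m/4, m*Real.sqrt 3/4), ?_⟩
  have hm0 : 0 < m := by simp only [hm]; linarith
  have hma : a < m := by simp only [hm]; linarith
  have hma' : m < a' := by simp only [hm]; linarith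
  refine ⟨?_, ?_, ?_, ?_, ?_, ?_⟩ <;> simp only [Ux, Set.mem_setOf_eq, B1_pt, B2_pt] <;> linarith

lemma Vz_nonempty {b b' : ℝ} (hb : 0 ≤ b) (hbb : b < b') (hb' : b' ≤ 1) :
    (Vz b b').Nonempty := by
  set m := (b + b')/2 with hm
  refine ⟨(3*m/4, m*Real.sqrt 3/4), ?_⟩
  have hm0 : 0 < m := by simp only [hm]; linarith
  have hmb : b < m := by simp only [hm]; linarith
  have hmb' : m < b' := by simp only [hm]; linarith
  refine ⟨?_, ?_, ?_, ?_⟩ <;> simp only [B1_pt, B2_pt] <;> linarith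

lemma jmax_Ux {a a' : ℝ} {x : ℝ × ℝ} (hx : x ∈ Ux a a') : jmax y1 y2 y3 x = 0 := by
  obtain ⟨-, -, h3, h4, -, -⟩ := hx
  exact jmax_eq_zero h3.le h4.le

lemma nu_UV_pos {a a' b b' : ℝ} (hne : (Ux a a').Nonempty) (hne' : (Vz b b').Nonempty)
    (hb' : b' ≤ 1) : 0 < nu (Ux a a' ×ˢ Vz b b') := by
  rw [Measure.prod_prod]
  exact ENNReal.mul_pos
    (unif_pos_of_open (isOpen_Ux a a') hne (Ux_subset_T a a')).ne'
    (unif_pos_of_open (isOpen_Vz b b') hne' (Vz_subset_T hb')).ne'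

lemma one_sub_bary {a a' : ℝ} {x z : ℝ × ℝ} (hx : x ∈ Ux a a') :
    1 - bary y1 y2 y3 z (jmax y1 y2 y3 x) = B1 z + B2 z := by
  rw [jmax_Ux hx, bary_zero]; ring

lemma mu_strict {r₁ r₂ : ℝ} (h1 : 1 ≤ r₁) (h12 : r₁ < r₂) : mu r₁ < mu r₂ := by
  have hr₁ : (0:ℝ) < r₁ := lt_of_lt_of_le one_pos h1
  have hr₂ : (0:ℝ) < r₂ := hr₁.trans h12
  set a : ℝ := 1/(2*r₂) with ha_def
  set a' : ℝ := (1/(2*r₂) + 1/(2*r₁))/2 with ha'_def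
  have hinv : 1/(2*r₂) < 1/(2*r₁) := by
    apply one_div_lt_one_div_of_lt (by positivity) (by linarith)
  have ha0 : 0 < a := by positivity
  have haa' : a < a' := by rw [ha_def, ha'_def]; linarith
  have ha'lt : a' < 1/(2*r₁) := by rw [ha'_def]; linarith
  have hr₁inv : 1/(2*r₁) ≤ 1/2 := by
    rw [div_le_div_iff₀ (by positivity) (by norm_num)]; linarith
  have ha'half : a' ≤ 1/2 := by linarith
  have hra : r₂ * a = 1/2 := by rw [ha_def]; field_simp
  have hra' : r₁ * a' < 1/2 := by
    have := mul_lt_mul_of_pos_left ha'lt hr₁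
    have h2 : r₁ * (1/(2*r₁)) = 1/2 := by field_simp
    linarith
  have hra'0 : 0 ≤ r₁ * a' := by positivity
  set U := Ux a a' with hU
  set V := Vz (r₁*a') (1/2) with hV
  have hUne : U.Nonempty := Ux_nonempty ha0.le haa' ha'half
  have hVne : V.Nonempty := Vz_nonempty hra'0 hra' (by norm_num)
  have hpos : 0 < nu (U ×ˢ V) := nu_UV_pos hUne hVne (by norm_num)
  have hsub2 : U ×ˢ V ⊆ E r₂ := by
    rintro ⟨x, z⟩ ⟨hx, hz⟩
    refine ⟨Vz_subset_T (by norm_num) hz, ?_⟩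
    rw [one_sub_bary hx, one_sub_bary hx]
    obtain ⟨-, -, -, -, hax, -⟩ := hx
    obtain ⟨-, -, -, hzlt⟩ := hz
    have := mul_lt_mul_of_pos_left hax hr₂
    linarith
  have hnotin : ∀ p ∈ U ×ˢ V, p ∉ E r₁ := by
    rintro ⟨x, z⟩ ⟨hx, hz⟩ ⟨-, hle⟩
    rw [one_sub_bary hx, one_sub_bary hx] at hle
    obtain ⟨-, -, -, -, -, hax'⟩ := hx
    obtain ⟨-, -, hzgt, -⟩ := hz
    have := mul_lt_mul_of_pos_left hax' hr₁
    linarith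
  have hdisj : Disjoint (E r₁ ∩ T ×ˢ T) (U ×ˢ V) := by
    rw [Set.disjoint_right]
    intro p hp hp'
    exact hnotin p hp hp'.1
  have hmeasUV : MeasurableSet (U ×ˢ V) :=
    (isOpen_Ux a a').measurableSet.prod (isOpen_Vz _ _).measurableSet
  have key : nu (E r₁) + nu (U ×ˢ V) ≤ nu (E r₂) := by
    rw [← nu_inter_TT (E r₁), ← measure_union hdisj hmeasUV]
    refine measure_mono (Set.union_subset (E_inter_mono h12.le) hsub2)
  have hlt : nu (E r₁) < nu (E r₂) :=
    lt_of_lt_of_le (ENNReal.lt_add_right (measure_ne_top _ _) hpos.ne') key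
  rw [mu_eq, mu_eq]
  exact (ENNReal.toReal_lt_toReal (measure_ne_top _ _) (measure_ne_top _ _)).2 hlt

lemma mu_lt_one {r : ℝ} (h1 : 1 ≤ r) : mu r < 1 := by
  have hr : (0:ℝ) < r := lt_of_lt_of_le one_pos h1
  set U := Ux 0 (1/(2*r)) with hU
  set V := Vz (1/2) (7/8) with hV
  have hr1 : 1/(2*r) ≤ 1/2 := by
    rw [div_le_div_iff₀ (by positivity) (by norm_num)]; linarith
  have hUne : U.Nonempty := Ux_nonempty le_rfl (by positivity) hr1
  have hVne : V.Nonempty := Vz_nonempty (by norm_num) (by norm_num) (by norm_num)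
  have hpos : 0 < nu (U ×ˢ V) := nu_UV_pos hUne hVne (by norm_num)
  have hnotin : ∀ p ∈ U ×ˢ V, p ∉ E r := by
    rintro ⟨x, z⟩ ⟨hx, hz⟩ ⟨-, hle⟩
    rw [one_sub_bary hx, one_sub_bary hx] at hle
    obtain ⟨-, -, -, -, -, hax'⟩ := hx
    obtain ⟨-, -, hzgt, -⟩ := hz
    have h2 : r * (B1 x + B2 x) < r * (1/(2*r)) := mul_lt_mul_of_pos_left hax' hr
    have h3 : r * (1/(2*r)) = 1/2 := by field_simp
    linarith
  have hdisj : Disjoint (E r) (U ×ˢ V) := by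
    rw [Set.disjoint_right]
    intro p hp hp'
    exact hnotin p hp hp'
  have hmeasUV : MeasurableSet (U ×ˢ V) :=
    (isOpen_Ux _ _).measurableSet.prod (isOpen_Vz _ _).measurableSet
  have key : nu (E r) + nu (U ×ˢ V) ≤ 1 := by
    rw [← measure_union hdisj hmeasUV]
    exact prob_le_one
  have hlt : nu (E r) < 1 := by
    by_contra hcon
    push_neg at hcon
    have h1' : nu (E r) = 1 := le_antisymm prob_le_one hcon
    rw [h1'] at key
    have : nu (U ×ˢ V) = 0 := by
      by_contra h0
      exact absurd key (not_le.2 (ENNReal.lt_add_right ENNReal.one_ne_top h0))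
    exact hpos.ne' this
  rw [mu_eq]
  calc (nu (E r)).toReal < (1 : ENNReal).toReal :=
        (ENNReal.toReal_lt_toReal (measure_ne_top _ _) ENNReal.one_ne_top).2 hlt
    _ = 1 := ENNReal.toReal_one

lemma x2_eq (x : ℝ × ℝ) : x.2 = Real.sqrt 3 / 2 * B2 x := by
  have hs := sqrt3_pos.ne'
  unfold B2; field_simp

lemma x1_eq (x : ℝ × ℝ) : x.1 = B1 x + B2 x / 2 := by
  have hs := sqrt3_pos.ne'
  unfold B1 B2; field_simp; ring

lemma vertex_of_bary_eq_one {x : ℝ × ℝ} (hx : x ∈ T)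
    (hj : bary y1 y2 y3 x (jmax y1 y2 y3 x) = 1) :
    x ∈ ({y1, y2, y3} : Set (ℝ × ℝ)) := by
  rw [mem_T_iff] at hx
  obtain ⟨h1, h2, h3⟩ := hx
  have hs := sqrt3_pos.ne'
  rcases (by decide : ∀ j : Fin 3, j = 0 ∨ j = 1 ∨ j = 2) (jmax y1 y2 y3 x)
    with h | h | h <;> rw [h] at hj
  · rw [bary_zero] at hj
    left
    refine Prod.ext_iff.mpr ⟨?_, ?_⟩
    · rw [x1_eq x]; show B1 x + B2 x / 2 = (0:ℝ); linarith
    · rw [x2_eq x]; show Real.sqrt 3 / 2 * B2 x = (0:ℝ)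
      have : B2 x = 0 := by linarith
      rw [this]; ring
  · rw [bary_one] at hj
    right; left
    have hB2 : B2 x = 0 := by linarith
    refine Prod.ext_iff.mpr ⟨?_, ?_⟩
    · rw [x1_eq x]; show B1 x + B2 x / 2 = (1:ℝ); rw [hj, hB2]; ring
    · rw [x2_eq x]; show Real.sqrt 3 / 2 * B2 x = (0:ℝ); rw [hB2]; ring
  · rw [bary_two] at hj
    right; right
    have hB1 : B1 x = 0 := by linarith
    refine Prod.ext_iff.mpr ⟨?_, ?_⟩
    · rw [x1_eq x]; show B1 x + B2 x / 2 = (1/2:ℝ); rw [hj, hB1]; ring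
    · rw [x2_eq x]; show Real.sqrt 3 / 2 * B2 x = Real.sqrt 3 / 2; rw [hj]; ring

lemma unif_vertices : unif T ({y1, y2, y3} : Set (ℝ × ℝ)) = 0 := by
  have hm : MeasurableSet ({y1, y2, y3} : Set (ℝ × ℝ)) := (Set.toFinite _).measurableSet
  rw [unif_apply _ hm]
  have hv : volume ({y1, y2, y3} : Set (ℝ × ℝ)) = 0 := by
    rw [Measure.volume_eq_prod]
    exact Set.Finite.measure_zero (Set.toFinite _) _
  have : volume (({y1, y2, y3} : Set (ℝ × ℝ)) ∩ T) = 0 :=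
    measure_mono_null Set.inter_subset_left hv
  rw [this, mul_zero]

def C (n : ℕ) : Set ((ℝ × ℝ) × (ℝ × ℝ)) := (T ×ˢ T) \ E n

lemma C_meas (n : ℕ) : MeasurableSet (C n) :=
  ((measurableSet_T.prod measurableSet_T).diff (measurableSet_E n))

lemma C_antitone : Antitone C := by
  intro m n hmn p hp
  obtain ⟨hTT, hnE⟩ := hp
  refine ⟨hTT, fun hE => hnE ?_⟩
  exact E_inter_mono (by exact_mod_cast hmn) ⟨hE, hTT⟩

lemma iInter_C_subset : (⋂ n, C n) ⊆ ({y1, y2, y3} : Set (ℝ × ℝ)) ×ˢ univ := by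
  intro p hp
  rw [Set.mem_iInter] at hp
  obtain ⟨⟨hx, hz⟩, -⟩ := hp 0
  set hv : ℝ := 1 - bary y1 y2 y3 p.1 (jmax y1 y2 y3 p.1) with hv_def
  have hv0 : 0 ≤ hv := by
    have := bary_le_one hx (jmax y1 y2 y3 p.1)
    rw [hv_def]; linarith
  have hveq : hv = 0 := by
    by_contra hne
    have hvpos : 0 < hv := lt_of_le_of_ne hv0 (Ne.symm hne)
    obtain ⟨n, hn⟩ := exists_nat_gt ((1 - bary y1 y2 y3 p.2 (jmax y1 y2 y3 p.1)) / hv)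
    have hlt : 1 - bary y1 y2 y3 p.2 (jmax y1 y2 y3 p.1) ≤ (n : ℝ) * hv := by
      rw [div_lt_iff₀ hvpos] at hn
      linarith
    exact (hp n).2 ⟨hz, hlt⟩
  have hb1 : bary y1 y2 y3 p.1 (jmax y1 y2 y3 p.1) = 1 := by
    rw [hv_def] at hveq; linarith
  exact ⟨vertex_of_bary_eq_one hx hb1, trivial⟩

lemma nu_iInter_C : nu (⋂ n, C n) = 0 := by
  refine le_antisymm ?_ zero_le
  calc nu (⋂ n, C n) ≤ nu (({y1, y2, y3} : Set (ℝ × ℝ)) ×ˢ univ) :=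
        measure_mono iInter_C_subset
    _ = 0 := by rw [Measure.prod_prod, unif_vertices, zero_mul]

lemma tendsto_nuC : Filter.Tendsto (fun n => nu (C n)) Filter.atTop (nhds 0) := by
  have h := tendsto_measure_iInter_atTop (μ := nu)
    (fun n => (C_meas n).nullMeasurableSet) C_antitone ⟨0, measure_ne_top _ _⟩
  rw [nu_iInter_C] at h
  exact h

lemma mu_nat (n : ℕ) : mu n = 1 - (nu (C n)).toReal := by
  have hsplit : nu ((T ×ˢ T) ∩ E n) + nu ((T ×ˢ T) \ E n) = nu (T ×ˢ T) :=
    measure_inter_add_diff _ (measurableSet_E n)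
  rw [nu_TT] at hsplit
  have h1 : nu (E n) = nu ((T ×ˢ T) ∩ E n) := by
    rw [Set.inter_comm, nu_inter_TT]
  have h2 : ((nu ((T ×ˢ T) ∩ E n)) + (nu ((T ×ˢ T) \ E n))).toReal
      = (nu ((T ×ˢ T) ∩ E n)).toReal + (nu ((T ×ˢ T) \ E n)).toReal :=
    ENNReal.toReal_add (measure_ne_top _ _) (measure_ne_top _ _)
  rw [hsplit] at h2
  rw [mu_eq, h1]
  show (nu ((T ×ˢ T) ∩ E n)).toReal = 1 - (nu (C n)).toReal
  have : (1 : ENNReal).toReal = 1 := ENNReal.toReal_one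
  rw [this] at h2
  have hC : C n = (T ×ˢ T) \ E n := rfl
  rw [hC]
  linarith

lemma tendsto_mu_nat : Filter.Tendsto (fun n : ℕ => mu n) Filter.atTop (nhds 1) := by
  have h2 : Filter.Tendsto (fun n => (nu (C n)).toReal) Filter.atTop (nhds 0) := by
    have := (ENNReal.tendsto_toReal (a := 0) (by simp)).comp tendsto_nuC
    simpa [Function.comp_def] using this
  have h3 := (tendsto_const_nhds (x := (1:ℝ)) (f := Filter.atTop (α := ℕ))).sub h2
  rw [sub_zero] at h3
  refine h3.congr fun n => ?_
  rw [mu_nat n]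

/-- The null arc probability `μ(r)` is strictly increasing on `[1, ∞)`,
is always `< 1` there, and tends to `1` as `r → ∞`. -/
theorem mu_strictMono_lt_one_tendsto_one :
    (∀ r₁ r₂ : ℝ, 1 ≤ r₁ → r₁ < r₂ → mu r₁ < mu r₂) ∧
    (∀ r : ℝ, 1 ≤ r → mu r < 1) ∧
    Filter.Tendsto mu Filter.atTop (nhds 1) := by
  refine ⟨fun r₁ r₂ h1 h12 => mu_strict h1 h12, fun r h1 => mu_lt_one h1, ?_⟩
  rw [Metric.tendsto_atTop]
  intro ε hε
  obtain ⟨n, hn⟩ := Metric.tendsto_atTop.1 tendsto_mu_nat ε hε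
  refine ⟨(n : ℝ), fun r hr => ?_⟩
  have h1 : mu n ≤ mu r := mu_mono hr
  have h2 := hn n le_rfl
  rw [Real.dist_eq] at h2 ⊢
  rw [abs_of_nonpos (by linarith [mu_le_one r] : mu r - 1 ≤ 0)]
  rw [abs_of_nonpos (by linarith [mu_le_one (n : ℝ)] : mu (n:ℝ) - 1 ≤ 0)] at h2
  linarith
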